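/- Let E be a Hausdorff locally convex topological vector space and F = [C]^× a nonempty subset of E, weak-admissible at x̂ ∈ F \ int(F) and determined by C. If the set S := { φ ∈ C : φ(x̂) ≠ 0 } is finite, then T_C(x̂) equals the weak-star closed convex hull of { d_Gφ(x̂) : φ ∈ C, φ(x̂) = 0 }. If moreover C itself is finite, then T_C(x̂) = conv{ d_Gφ(x̂) : φ ∈ C, φ(x̂) = 0 } (the convex hull, no closure needed). -/

import Mathlib

open Topology Filter Set

noncomputable section

section Defs

variable {E : Type*} [AddCommGroup E] [Module ℝ E] [TopologicalSpace E]

/-- The canonical map from the topological dual of `E` to the weak-star dual. -/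
def toWD (φ : E →L[ℝ] ℝ) : WeakDual ℝ E := φ

/-- The weak-star closed convex hull of a set of continuous linear functionals. -/
def wcch (B : Set (E →L[ℝ] ℝ)) : Set (WeakDual ℝ E) :=
  closure (convexHull ℝ (toWD '' B))

/-- `f` is Gateaux differentiable at `x` with Gateaux-differential `f'`. -/
def HasGateauxAt (f : E → ℝ) (f' : E →L[ℝ] ℝ) (x : E) : Prop :=
  ∀ v : E, Tendsto (fun t : ℝ => (f (x + t • v) - f x - t * f' v) / t) (𝓝[>] 0) (𝓝 0)

/-- The family `C` is equi-Gateaux differentiable at `x`, with differentials given by `D`. -/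
def EquiGateauxAt (C : Set (E → ℝ)) (D : (E → ℝ) → E →L[ℝ] ℝ) (x : E) : Prop :=
  (∀ φ ∈ C, HasGateauxAt φ (D φ) x) ∧
  ∀ v : E, ∀ ε : ℝ, 0 < ε → ∃ δ : ℝ, 0 < δ ∧ ∀ t : ℝ, 0 < t → t < δ →
    ∀ φ ∈ C, |(φ (x + t • v) - φ x - t * (D φ) v) / t| ≤ ε

/-- The family `C` is equi-lower semicontinuous at `x`. -/
def EquiLscAt (C : Set (E → ℝ)) (x : E) : Prop :=
  ∀ ε : ℝ, 0 < ε → ∃ O ∈ 𝓝 x, ∀ y ∈ O, ∀ φ ∈ C, φ y - φ x > -ε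

/-- `[C]^× = {x ∈ E : φ(x) ≥ 0 for all φ ∈ C}`. -/
def polarSet (C : Set (E → ℝ)) : Set E := {x | ∀ φ ∈ C, 0 ≤ φ x}

/-- The multiplier set `T_C(x̂)`. -/
def multSet (C : Set (E → ℝ)) (D : (E → ℝ) → E →L[ℝ] ℝ) (x : E) : Set (WeakDual ℝ E) :=
  ⋂ n ∈ {n : ℕ | 1 ≤ n}, wcch (D '' {φ | φ ∈ C ∧ φ x ∈ Icc (0:ℝ) (1/(n:ℝ))})

/-- `F` is weak-admissible at `x ∈ F`, determined by `C` (with differentials `D`). -/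
def WeakAdmissibleAt (F : Set E) (C : Set (E → ℝ)) (D : (E → ℝ) → E →L[ℝ] ℝ) (x : E) : Prop :=
  x ∈ F ∧ C.Nonempty ∧ F = polarSet C ∧ EquiGateauxAt C D x ∧
    ({φ | φ ∈ C ∧ φ x ≠ 0} = ∅ ∨ EquiLscAt {φ | φ ∈ C ∧ φ x ≠ 0} x) ∧
    IsCompact (wcch (D '' C))

end Defs

section NormedDefs

variable {Y : Type*} [NormedAddCommGroup Y] [NormedSpace ℝ Y]

/-- `A` is admissible at `x ∈ A`, determined by `C` (with differentials `D`). -/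
def AdmissibleAt (A : Set Y) (C : Set (Y → ℝ)) (D : (Y → ℝ) → Y →L[ℝ] ℝ) (x : Y) : Prop :=
  x ∈ A ∧ C.Nonempty ∧ A = polarSet C ∧ EquiGateauxAt C D x ∧
    (∃ r : NNReal, ∃ ε : ℝ, 0 < ε ∧ ∀ φ ∈ C, LipschitzOnWith r φ (Metric.ball x ε)) ∧
    toWD (0 : Y →L[ℝ] ℝ) ∉ wcch (D '' C)

/-- The recession cone of a set. -/
def recCone (K : Set Y) : Set Y := {v | ∀ l : ℝ, 0 < l → ∀ x ∈ K, x + l • v ∈ K}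

/-- The barrier cone of `K`: functionals bounded above on `K`. -/
def barCone (K : Set Y) : Set (Y →L[ℝ] ℝ) := {φ | BddAbove (φ '' K)}

/-- The dual positive cone `A*`. -/
def posDualCone (A : Set Y) : Set (Y →L[ℝ] ℝ) := {φ | ∀ y ∈ A, 0 ≤ φ y}

end NormedDefs

/-- If `F = [C]^×` is weak-admissible at `xh ∈ F \ int(F)` determined by `C`
and `S = {φ ∈ C : φ(xh) ≠ 0}` is finite, then `T_C(xh)` is the weak-star closed convex hull
of `{d_Gφ(xh) : φ ∈ C, φ(xh) = 0}`; if moreover `C` is finite, then `T_C(xh)` is the plain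
convex hull of that set. -/
theorem multSet_of_finite_active
    {E : Type*} [AddCommGroup E] [Module ℝ E] [TopologicalSpace E]
    [IsTopologicalAddGroup E] [ContinuousSMul ℝ E] [LocallyConvexSpace ℝ E] [T2Space E]
    (F : Set E) (hF : F.Nonempty) (C : Set (E → ℝ)) (D : (E → ℝ) → E →L[ℝ] ℝ) (xh : E)
    (hadm : WeakAdmissibleAt F C D xh)
    (hx : xh ∈ F \ interior F) :
    ({φ | φ ∈ C ∧ φ xh ≠ 0}.Finite →
      multSet C D xh = wcch (D '' {φ | φ ∈ C ∧ φ xh = 0})) ∧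
    (C.Finite →
      multSet C D xh = convexHull ℝ (toWD '' (D '' {φ | φ ∈ C ∧ φ xh = 0}))) := by
  obtain ⟨hxF, -, hFC, -, -, -⟩ := hadm
  have hpos : ∀ φ ∈ C, 0 ≤ φ xh := by
    intro φ hφ
    have hx' := hxF
    rw [hFC] at hx'
    exact hx' φ hφ
  have main : {φ | φ ∈ C ∧ φ xh ≠ 0}.Finite →
      multSet C D xh = wcch (D '' {φ | φ ∈ C ∧ φ xh = 0}) := by
    intro hS
    obtain ⟨ε, hε, hεsmall⟩ : ∃ ε > (0:ℝ), ∀ φ ∈ C, φ xh < ε → φ xh = 0 := by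
      by_cases hne : {φ | φ ∈ C ∧ φ xh ≠ 0}.Nonempty
      · obtain ⟨φ₀, hφ₀, hmin⟩ :=
          Set.exists_min_image _ (fun φ => φ xh) hS hne
        refine ⟨φ₀ xh, lt_of_le_of_ne (hpos _ hφ₀.1) (Ne.symm hφ₀.2), ?_⟩
        intro φ hφ hlt
        by_contra h0
        exact absurd (hmin φ ⟨hφ, h0⟩) (not_le.mpr hlt)
      · refine ⟨1, one_pos, ?_⟩
        intro φ hφ _
        by_contra h0
        exact hne ⟨φ, hφ, h0⟩
    obtain ⟨n₀, hn₀⟩ := exists_nat_one_div_lt hε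
    set N : ℕ := n₀ + 1 with hN
    have hN1 : 1 ≤ N := Nat.le_add_left 1 n₀
    have hNlt : 1 / (N : ℝ) < ε := by
      simpa [hN] using hn₀
    have hsetEq : {φ | φ ∈ C ∧ φ xh ∈ Icc (0:ℝ) (1/(N:ℝ))} = {φ | φ ∈ C ∧ φ xh = 0} := by
      ext φ
      constructor
      · rintro ⟨hφ, h0, h1⟩
        exact ⟨hφ, hεsmall φ hφ (lt_of_le_of_lt h1 hNlt)⟩
      · rintro ⟨hφ, h0⟩
        refine ⟨hφ, ?_, ?_⟩
        · rw [h0]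
        · rw [h0]
          positivity
    apply subset_antisymm
    · intro y hy
      have := Set.mem_iInter₂.mp hy N hN1
      rwa [hsetEq] at this
    · apply Set.subset_iInter₂
      intro n hn
      have hn1 : (1:ℕ) ≤ n := hn
      have hnpos : (0:ℝ) < (n:ℝ) := by exact_mod_cast hn1
      apply closure_mono
      apply convexHull_mono
      apply Set.image_mono
      apply Set.image_mono
      rintro φ ⟨hφ, h0⟩
      refine ⟨hφ, ?_, ?_⟩
      · rw [h0]
      · rw [h0]
        positivity
  refine ⟨main, ?_⟩
  intro hC
  have hS : {φ | φ ∈ C ∧ φ xh ≠ 0}.Finite :=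
    hC.subset (fun φ hφ => hφ.1)
  rw [main hS]
  unfold wcch
  have hfin : (toWD '' (D '' {φ | φ ∈ C ∧ φ xh = 0})).Finite :=
    ((hC.subset (fun φ hφ => hφ.1)).image D).image toWD
  exact ((hfin.isCompact_convexHull (𝕜 := ℝ)).isClosed).closure_eq
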